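/- arXiv:2409.11044 — 11 statements merged into one kernel-verified Lean document; each statement's English description precedes it below -/
import Mathlib

section
/- Let H = (c_1,…,c_k) be a C(1)-model and φ a preference statement. If φ is strict, then H satisfies φ if and only if some element of Supp^φ appears in H and the earliest element of Supp^φ ∪ Opp^φ appearing in H belongs to Supp^φ. If φ is non-strict, then H satisfies φ if and only if either no element of Opp^φ appears in H, or some element of Supp^φ appears in H before any element of Opp^φ appears. -/
open scoped NNRat

/-- A preference statement `α < β` (strict) or `α ≤ β` (non-strict). -/
structure PrefStmt (A : Type) where
  left : A
  right : A
  strict : Bool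

/-- The negation of a preference statement. -/
def negStmt {A : Type} (φ : PrefStmt A) : PrefStmt A :=
  ⟨φ.right, φ.left, !φ.strict⟩

/-- A `C(1)`-model (a list of evaluations) satisfies `α ≤ β`. -/
def satLe {A : Type} : List (A → ℚ≥0) → A → A → Prop
  | [], _, _ => True
  | c :: H, α, β => c α < c β ∨ (c α = c β ∧ satLe H α β)

/-- A `C(1)`-model (a list of evaluations) satisfies `α < β`. -/
def satLt {A : Type} : List (A → ℚ≥0) → A → A → Prop
  | [], _, _ => False
  | c :: H, α, β => c α < c β ∨ (c α = c β ∧ satLt H α β)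

/-- Satisfaction of a preference statement by a `C(1)`-model. -/
def sat {A : Type} (H : List (A → ℚ≥0)) (φ : PrefStmt A) : Prop :=
  if φ.strict then satLt H φ.left φ.right else satLe H φ.left φ.right
/-- The evaluations in `𝒞` supporting statement `φ`. -/
def SuppSet {A : Type} (𝒞 : Finset (A → ℚ≥0)) (φ : PrefStmt A) : Set (A → ℚ≥0) :=
  {c | c ∈ 𝒞 ∧ c φ.left < c φ.right}

/-- The evaluations in `𝒞` opposing statement `φ`. -/
def OppSet {A : Type} (𝒞 : Finset (A → ℚ≥0)) (φ : PrefStmt A) : Set (A → ℚ≥0) :=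
  {c | c ∈ 𝒞 ∧ c φ.right < c φ.left}

/-- `(Γ', C')` is an inconsistency base for `(Γ, 𝒞)`. -/
def InconsBase {A : Type} (𝒞 : Finset (A → ℚ≥0)) (Γ Γ' : Set (PrefStmt A))
    (C' : Set (A → ℚ≥0)) : Prop :=
  Γ' ⊆ Γ ∧ C' ⊆ (𝒞 : Set (A → ℚ≥0)) ∧
  (∀ φ ∈ Γ', SuppSet 𝒞 φ ∪ OppSet 𝒞 φ ⊆ C') ∧
  (∀ c ∈ C', ∃ φ ∈ Γ', c ∈ OppSet 𝒞 φ)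

/-- First component `Γ^⊥` of the maximal inconsistency base `MIB(Γ, 𝒞)`. -/
def MIBGamma {A : Type} (𝒞 : Finset (A → ℚ≥0)) (Γ : Set (PrefStmt A)) : Set (PrefStmt A) :=
  {φ | ∃ Γ' C', InconsBase 𝒞 Γ Γ' C' ∧ φ ∈ Γ'}

/-- Second component `C^⊥` of the maximal inconsistency base `MIB(Γ, 𝒞)`. -/
def MIBC {A : Type} (𝒞 : Finset (A → ℚ≥0)) (Γ : Set (PrefStmt A)) : Set (A → ℚ≥0) :=
  {c | ∃ Γ' C', InconsBase 𝒞 Γ Γ' C' ∧ c ∈ C'}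


lemma satLt_iff {A : Type} (H : List (A → ℚ≥0)) (α β : A) :
    satLt H α β ↔ ∃ i : Fin H.length, (H.get i) α < (H.get i) β ∧
      ∀ j : Fin H.length, j < i → (H.get j) α = (H.get j) β := by
  induction H with
  | nil => simp [satLt]
  | cons c H ih =>
    simp only [satLt, ih]
    constructor
    · rintro (h | ⟨heq, i, hi, hj⟩)
      · exact ⟨⟨0, Nat.succ_pos _⟩, h, fun j hj => absurd hj (Nat.not_lt_zero _)⟩
      · refine ⟨i.succ, hi, ?_⟩
        intro j hji
        refine Fin.cases ?_ (fun k hk => ?_) j hji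
        · intro _; exact heq
        · exact hj k (Fin.succ_lt_succ_iff.1 hk)
    · rintro ⟨i, hi, hj⟩
      refine Fin.cases (fun hi hj => Or.inl hi) (fun k hi hj => ?_) i hi hj
      · refine Or.inr ⟨hj ⟨0, Nat.succ_pos _⟩ (Nat.succ_pos _), k, ?_, ?_⟩
        · simpa using hi
        · intro m hm
          have := hj m.succ (Fin.succ_lt_succ_iff.2 hm)
          simpa using this

lemma satLe_iff {A : Type} (H : List (A → ℚ≥0)) (α β : A) :
    satLe H α β ↔ (∀ c ∈ H, ¬ (c β < c α)) ∨
      ∃ i : Fin H.length, (H.get i) α < (H.get i) β ∧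
        ∀ j : Fin H.length, j < i → ¬ ((H.get j) β < (H.get j) α) := by
  induction H with
  | nil => simp [satLe]
  | cons c H ih =>
    simp only [satLe, ih]
    constructor
    · rintro (h | ⟨heq, h | ⟨i, hi, hj⟩⟩)
      · exact Or.inr ⟨⟨0, Nat.succ_pos _⟩, h, fun j hj => absurd hj (Nat.not_lt_zero _)⟩
      · refine Or.inl ?_
        intro d hd
        rcases List.mem_cons.1 hd with rfl | hd
        · simp [heq]
        · exact h d hd
      · refine Or.inr ⟨i.succ, hi, ?_⟩
        intro j hji
        refine Fin.cases ?_ (fun k hk => ?_) j hji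
        · intro _; exact not_lt.2 heq.le
        · exact hj k (Fin.succ_lt_succ_iff.1 hk)
    · rintro (h | ⟨i, hi, hj⟩)
      · rcases lt_trichotomy (c α) (c β) with hc | hc | hc
        · exact Or.inl hc
        · exact Or.inr ⟨hc, Or.inl fun d hd => h d (List.mem_cons_of_mem _ hd)⟩
        · exact absurd hc (h c List.mem_cons_self)
      · refine Fin.cases (fun hi hj => Or.inl hi) (fun k hi hj => ?_) i hi hj
        have h0 : ¬ (c β < c α) := hj ⟨0, Nat.succ_pos _⟩ (Nat.succ_pos _)
        rcases lt_trichotomy (c α) (c β) with hc | hc | hc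
        · exact Or.inl hc
        · refine Or.inr ⟨hc, Or.inr ⟨k, by simpa using hi, fun m hm => by
            have := hj m.succ (Fin.succ_lt_succ_iff.2 hm); simpa using this⟩⟩
        · exact absurd hc h0

/-- Characterization of satisfaction of a preference statement by a `C(1)`-model in terms of
the supporting and opposing evaluations. -/
theorem stmt_2 {A : Type} [Fintype A] (𝒞 : Finset (A → ℚ≥0))
    (H : List (A → ℚ≥0)) (hnd : H.Nodup) (hmem : ∀ c ∈ H, c ∈ 𝒞)
    (φ : PrefStmt A) :
    (φ.strict = true →
      (sat H φ ↔ ∃ i : Fin H.length, H.get i ∈ SuppSet 𝒞 φ ∧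
        ∀ j : Fin H.length, j < i → H.get j ∉ SuppSet 𝒞 φ ∧ H.get j ∉ OppSet 𝒞 φ)) ∧
    (φ.strict = false →
      (sat H φ ↔ ((∀ c ∈ H, c ∉ OppSet 𝒞 φ) ∨
        ∃ i : Fin H.length, H.get i ∈ SuppSet 𝒞 φ ∧
          ∀ j : Fin H.length, j < i → H.get j ∉ OppSet 𝒞 φ))) := by
  constructor
  · intro hs
    simp only [sat, hs, if_pos]
    rw [satLt_iff]
    constructor
    · rintro ⟨i, hi, hj⟩
      refine ⟨i, ⟨hmem _ (H.get_mem i), hi⟩, fun j hji => ?_⟩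
      have := hj j hji
      constructor
      · rintro ⟨-, h⟩; exact absurd this h.ne
      · rintro ⟨-, h⟩; exact absurd this.symm h.ne
    · rintro ⟨i, ⟨-, hi⟩, hj⟩
      refine ⟨i, hi, fun j hji => ?_⟩
      have h1 := (hj j hji).1
      have h2 := (hj j hji).2
      have hm := hmem _ (H.get_mem j)
      simp only [SuppSet, OppSet, Set.mem_setOf_eq, not_and] at h1 h2
      exact le_antisymm (not_lt.1 (h2 hm)) (not_lt.1 (h1 hm))
  · intro hs
    simp only [sat, hs]
    rw [if_neg (by simp), satLe_iff]
    constructor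
    · rintro (h | ⟨i, hi, hj⟩)
      · refine Or.inl fun d hd => ?_
        rintro ⟨-, hop⟩; exact h d hd hop
      · refine Or.inr ⟨i, ⟨hmem _ (H.get_mem i), hi⟩, fun j hji => ?_⟩
        rintro ⟨-, hop⟩; exact hj j hji hop
    · rintro (h | ⟨i, ⟨-, hi⟩, hj⟩)
      · refine Or.inl fun d hd hop => h d hd ⟨hmem d hd, hop⟩
      · refine Or.inr ⟨i, hi, fun j hji hop => hj j hji ⟨hmem _ (H.get_mem j), hop⟩⟩
end

section
/- Let H be a C(1)-model satisfying every statement in Γ, and let (Γ', C') be an inconsistency base for (Γ, C). Then C' ∩ σ(H) = ∅, and for every φ ∈ Γ' we have c(α_φ) = c(β_φ) for every c ∈ σ(H) (so H does not satisfy the strict statement α_φ < β_φ). -/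
open scoped NNRat

lemma not_satLt_of_eq {A : Type} (H : List (A → ℚ≥0)) (α β : A)
    (h : ∀ c ∈ H, c α = c β) : ¬ satLt H α β := by
  induction H with
  | nil => exact id
  | cons c T ih =>
    rintro (h1 | ⟨h1, h2⟩)
    · exact absurd (h c (.head _)) h1.ne
    · exact ih (fun c' hc' => h c' (.tail _ hc')) h2

lemma main_aux {A : Type} (𝒞 : Finset (A → ℚ≥0)) (Γ Γ' : Set (PrefStmt A))
    (C' : Set (A → ℚ≥0)) (hib : InconsBase 𝒞 Γ Γ' C') :
    ∀ H : List (A → ℚ≥0), (∀ c ∈ H, c ∈ 𝒞) → (∀ φ ∈ Γ', sat H φ) →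
      (∀ c ∈ H, c ∉ C') ∧ ∀ φ ∈ Γ', ∀ c ∈ H, c φ.left = c φ.right := by
  intro H
  induction H with
  | nil => exact fun _ _ => ⟨fun c hc => (List.not_mem_nil hc).elim,
      fun φ _ c hc => (List.not_mem_nil hc).elim⟩
  | cons c T ih =>
    intro hmem hsat
    have hcC : c ∉ C' := by
      intro hc
      obtain ⟨ψ, hψ, hcmem, hopp⟩ := hib.2.2.2 c hc
      have hs := hsat ψ hψ
      unfold sat at hs
      cases hst : ψ.strict <;> simp only [hst, reduceIte] at hs <;>
        rcases hs with h | ⟨h, _⟩ <;>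
        first
          | exact absurd h (not_lt.mpr hopp.le)
          | exact absurd h (ne_of_gt hopp)
    have key : ∀ φ ∈ Γ', c φ.left = c φ.right ∧ sat T φ := by
      intro φ hφ
      have hs := hsat φ hφ
      have hnot : ¬ c φ.left < c φ.right := fun hlt =>
        hcC (hib.2.2.1 φ hφ (Or.inl ⟨hmem c (.head _), hlt⟩))
      unfold sat at hs ⊢
      cases hst : φ.strict <;> simp only [hst, reduceIte] at hs ⊢ <;>
        rcases hs with h | ⟨h1, h2⟩ <;>
        first | exact absurd h hnot | exact ⟨h1, h2⟩
    have ihT := ih (fun c' hc' => hmem c' (.tail _ hc')) (fun φ hφ => (key φ hφ).2)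
    refine ⟨?_, ?_⟩
    · intro c' hc'
      rcases List.mem_cons.mp hc' with rfl | hc'
      · exact hcC
      · exact ihT.1 c' hc'
    · intro φ hφ c' hc'
      rcases List.mem_cons.mp hc' with rfl | hc'
      · exact (key φ hφ).1
      · exact ihT.2 φ hφ c' hc'

/-- If `H` is a `C(1)`-model of `Γ` and `(Γ', C')` is an inconsistency base for `(Γ, 𝒞)`,
then `C' ∩ σ(H) = ∅`, and every `φ ∈ Γ'` is indifferent on all of `σ(H)`,
so `H` does not satisfy the strict statement `α_φ < β_φ`. -/
theorem stmt_3 {A : Type} [Fintype A] (𝒞 : Finset (A → ℚ≥0))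
    (Γ Γ' : Set (PrefStmt A)) (C' : Set (A → ℚ≥0))
    (H : List (A → ℚ≥0)) (hnd : H.Nodup) (hmem : ∀ c ∈ H, c ∈ 𝒞)
    (hsat : ∀ φ ∈ Γ, sat H φ)
    (hib : InconsBase 𝒞 Γ Γ' C') :
    (∀ c ∈ H, c ∉ C') ∧
    ∀ φ ∈ Γ', (∀ c ∈ H, c φ.left = c φ.right) ∧ ¬ satLt H φ.left φ.right := by
  have h := main_aux 𝒞 Γ Γ' C' hib H hmem (fun φ hφ => hsat φ (hib.1 hφ))
  exact ⟨h.1, fun φ hφ =>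
    ⟨h.2 φ hφ, not_satLt_of_eq H _ _ (h.2 φ hφ)⟩⟩
end

section
/- Suppose Γ is C(1)-consistent, i.e., some C(1)-model satisfies every statement in Γ. Then for any inconsistency base (Γ', C') for (Γ, C), the set Γ' contains no strict preference statements of Γ; in particular this holds for Γ' = Γ^⊥ where (Γ^⊥, C^⊥) = MIB(Γ, C). -/
open scoped NNRat

lemma allEq_not_satLt {A : Type} (H : List (A → ℚ≥0)) (l r : A)
    (h : ∀ c ∈ H, c l = c r) : ¬ satLt H l r := by
  induction H with
  | nil => simp [satLt]
  | cons c T ih =>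
    simp only [satLt]
    rintro (h1 | ⟨h1, h2⟩)
    · exact absurd h1 (by simp [h c (by simp)])
    · exact ih (fun d hd => h d (by simp [hd])) h2

lemma key_eq {A : Type} (𝒞 : Finset (A → ℚ≥0)) (Γ' : Set (PrefStmt A)) (C' : Set (A → ℚ≥0))
    (hsupp : ∀ φ ∈ Γ', SuppSet 𝒞 φ ∪ OppSet 𝒞 φ ⊆ C')
    (hopp : ∀ c ∈ C', ∃ φ ∈ Γ', c ∈ OppSet 𝒞 φ) :
    ∀ H : List (A → ℚ≥0), (∀ c ∈ H, c ∈ 𝒞) → (∀ φ ∈ Γ', sat H φ) →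
      ∀ φ ∈ Γ', ∀ c ∈ H, c φ.left = c φ.right := by
  intro H
  induction H with
  | nil => intro _ _ φ hφ c hc; simp at hc
  | cons c T ih =>
    intro hmem hsat
    have hceq : ∀ φ ∈ Γ', c φ.left = c φ.right := by
      by_contra h
      push_neg at h
      obtain ⟨φ, hφ, hne⟩ := h
      have hC' : c ∈ C' := by
        apply hsupp φ hφ
        rcases lt_or_gt_of_ne hne with h' | h'
        · exact Or.inl ⟨hmem c (by simp), h'⟩
        · exact Or.inr ⟨hmem c (by simp), h'⟩
      obtain ⟨ψ, hψ, hcm, hlt⟩ := hopp c hC'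
      have hs := hsat ψ hψ
      unfold sat at hs
      rcases Bool.eq_false_or_eq_true ψ.strict with hb | hb <;>
        simp only [hb, if_true, if_false, Bool.false_eq_true, satLt, satLe] at hs <;>
        rcases hs with h1 | ⟨h1, _⟩
      · exact absurd h1 (not_lt.2 hlt.le)
      · simp [h1] at hlt
      · exact absurd h1 (not_lt.2 hlt.le)
      · simp [h1] at hlt
    have hsatT : ∀ φ ∈ Γ', sat T φ := by
      intro φ hφ
      have hs := hsat φ hφ
      have he := hceq φ hφ
      unfold sat at hs ⊢
      rcases Bool.eq_false_or_eq_true φ.strict with hb | hb <;>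
        simp only [hb, if_true, if_false, Bool.false_eq_true, satLt, satLe] at hs ⊢ <;>
        rcases hs with h1 | ⟨h1, h2⟩
      · exact absurd h1 (by simp [he])
      · exact h2
      · exact absurd h1 (by simp [he])
      · exact h2
    intro φ hφ d hd
    rcases List.mem_cons.1 hd with rfl | hd
    · exact hceq φ hφ
    · exact ih (fun e he => hmem e (by simp [he])) hsatT φ hφ d hd

/-- If `Γ` is `C(1)`-consistent, then no inconsistency base for `(Γ, 𝒞)` contains a strict
statement; in particular `Γ^⊥` contains no strict statement. -/
theorem stmt_6 {A : Type} [Fintype A] (𝒞 : Finset (A → ℚ≥0)) (Γ : Set (PrefStmt A))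
    (hcons : ∃ H : List (A → ℚ≥0), H.Nodup ∧ (∀ c ∈ H, c ∈ 𝒞) ∧ ∀ φ ∈ Γ, sat H φ) :
    (∀ Γ' C', InconsBase 𝒞 Γ Γ' C' → ∀ φ ∈ Γ', φ.strict = false) ∧
    (∀ φ ∈ MIBGamma 𝒞 Γ, φ.strict = false) := by
  obtain ⟨H, _, hHmem, hHsat⟩ := hcons
  have main : ∀ Γ' C', InconsBase 𝒞 Γ Γ' C' → ∀ φ ∈ Γ', φ.strict = false := by
    intro Γ' C' ⟨hsub, _, hsupp, hopp⟩ φ hφ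
    by_contra hb
    have hb' : φ.strict = true := by simpa using hb
    have heq := key_eq 𝒞 Γ' C' hsupp hopp H hHmem
      (fun ψ hψ => hHsat ψ (hsub hψ)) φ hφ
    have hs := hHsat φ (hsub hφ)
    unfold sat at hs
    rw [hb'] at hs
    simp only [if_true] at hs
    exact allEq_not_satLt H φ.left φ.right heq hs
  exact ⟨main, fun φ ⟨Γ', C', hib, hφ⟩ => main Γ' C' hib φ hφ⟩
end

section
/- Let H = (c_1,…,c_k) be any output of the greedy algorithm on (Γ, C). Then H satisfies every statement in Γ^(≤), the set of non-strict versions α_φ ≤ β_φ of the statements φ ∈ Γ; moreover H satisfies (strictly) every statement in Supp(H). -/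
open scoped NNRat

/-- `Opp(c)`: the statements of `Γ` opposed by evaluation `c`. -/
def OppG {A : Type} (Γ : Set (PrefStmt A)) (c : A → ℚ≥0) : Set (PrefStmt A) :=
  {φ | φ ∈ Γ ∧ c φ.right < c φ.left}

/-- `Supp(c₁,…,c_m)`: the statements of `Γ` supported by some evaluation of the list `L`. -/
def SuppL {A : Type} (Γ : Set (PrefStmt A)) (L : List (A → ℚ≥0)) : Set (PrefStmt A) :=
  {φ | φ ∈ Γ ∧ ∃ c ∈ L, c φ.left < c φ.right}

/-- `H` is a possible output of the greedy algorithm on `(Γ, 𝒞)`. -/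
def GreedyOutput {A : Type} (𝒞 : Finset (A → ℚ≥0)) (Γ : Set (PrefStmt A))
    (H : List (A → ℚ≥0)) : Prop :=
  H.Nodup ∧ (∀ c ∈ H, c ∈ 𝒞) ∧
  (∀ i : Fin H.length, OppG Γ (H.get i) ⊆ SuppL Γ (H.take i.1)) ∧
  (∀ c ∈ 𝒞, c ∉ H → ¬ (OppG Γ c ⊆ SuppL Γ H))

lemma satLt_of_index {A : Type} (H : List (A → ℚ≥0)) (α β : A) (i : ℕ) (hi : i < H.length)
    (hlt : H[i] α < H[i] β) (heq : ∀ j, (hj : j < H.length) → j < i → H[j] α = H[j] β) :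
    satLt H α β := by
  induction H generalizing i with
  | nil => simp at hi
  | cons c T ih =>
    cases i with
    | zero => exact Or.inl hlt
    | succ n =>
      exact Or.inr ⟨heq 0 (by simp) (Nat.succ_pos n),
        ih n (by simpa using hi) hlt
          (fun j hj hji => heq (j+1) (by simpa using hj) (by omega))⟩

lemma satLe_of_satLt {A : Type} (H : List (A → ℚ≥0)) (α β : A) (h : satLt H α β) :
    satLe H α β := by
  induction H with
  | nil => trivial
  | cons c T ih =>
    rcases h with h | ⟨h1, h2⟩
    · exact Or.inl h
    · exact Or.inr ⟨h1, ih h2⟩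

lemma satLe_of_all_eq {A : Type} (H : List (A → ℚ≥0)) (α β : A)
    (h : ∀ c ∈ H, c α = c β) : satLe H α β := by
  induction H with
  | nil => trivial
  | cons c T ih =>
    exact Or.inr ⟨h c (by simp), ih (fun d hd => h d (by simp [hd]))⟩

lemma greedy_strict {A : Type} (𝒞 : Finset (A → ℚ≥0)) (Γ : Set (PrefStmt A))
    (H : List (A → ℚ≥0)) (hgo : GreedyOutput 𝒞 Γ H) (φ : PrefStmt A) (hφ : φ ∈ Γ)
    (hne : ∃ i : ℕ, i < H.length ∧ H.getD i 0 φ.left ≠ H.getD i 0 φ.right) :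
    satLt H φ.left φ.right := by
  classical
  let P : ℕ → Prop := fun i => i < H.length ∧ H.getD i 0 φ.left ≠ H.getD i 0 φ.right
  have hP : ∃ i, P i := hne
  let i := Nat.find hP
  obtain ⟨hi, hine⟩ : P i := Nat.find_spec hP
  have hmin : ∀ j, j < i → j < H.length → H.getD j 0 φ.left = H.getD j 0 φ.right := by
    intro j hj hjlen
    by_contra hne'
    exact absurd ⟨hjlen, hne'⟩ (Nat.find_min hP hj)
  have hgetD : H.getD i 0 = H[i] := List.getD_eq_getElem H 0 hi
  have hlt : H[i] φ.left < H[i] φ.right := by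
    rcases lt_trichotomy (H[i] φ.left) (H[i] φ.right) with h | h | h
    · exact h
    · exact absurd (by rw [hgetD]; exact h) hine
    · -- opposed: greedy condition gives a supporting earlier index, contradiction
      have hopp : φ ∈ OppG Γ (H.get ⟨i, hi⟩) := ⟨hφ, by simpa using h⟩
      have := hgo.2.2.1 ⟨i, hi⟩ hopp
      obtain ⟨-, c, hc, hclt⟩ := this
      obtain ⟨j, hjlen, hjc⟩ := List.getElem_of_mem hc
      have hjlen' : j < H.length := lt_of_lt_of_le hjlen (by simp)
      have hji : j < i := by
        have := hjlen
        simp only [List.length_take] at this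
        omega
      have hjH : (H.take i)[j] = H[j] := List.getElem_take
      rw [hjH] at hjc
      have heqj := hmin j hji hjlen'
      rw [List.getD_eq_getElem H 0 hjlen'] at heqj
      rw [← hjc] at hclt
      exact absurd heqj (ne_of_lt hclt)
  exact satLt_of_index H φ.left φ.right i hi hlt
    (fun j hj hji => by
      have := hmin j hji hj
      rwa [List.getD_eq_getElem H 0 hj] at this)

/-- Any output `H` of the greedy algorithm satisfies `Γ^(≤)` (the non-strict versions of all
statements of `Γ`), and strictly satisfies every statement in `Supp(H)`. -/
theorem stmt_7 {A : Type} [Fintype A] (𝒞 : Finset (A → ℚ≥0)) (Γ : Set (PrefStmt A))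
    (H : List (A → ℚ≥0)) (hgo : GreedyOutput 𝒞 Γ H) :
    (∀ φ ∈ Γ, satLe H φ.left φ.right) ∧
    (∀ φ ∈ SuppL Γ H, satLt H φ.left φ.right) := by
  classical
  constructor
  · intro φ hφ
    by_cases hall : ∀ c ∈ H, c φ.left = c φ.right
    · exact satLe_of_all_eq H _ _ hall
    · push_neg at hall
      obtain ⟨c, hc, hne⟩ := hall
      obtain ⟨i, hi, hic⟩ := List.getElem_of_mem hc
      refine satLe_of_satLt H _ _ (greedy_strict 𝒞 Γ H hgo φ hφ ⟨i, hi, ?_⟩)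
      rw [List.getD_eq_getElem H 0 hi, hic]; exact hne
  · rintro φ ⟨hφ, c, hc, hlt⟩
    obtain ⟨i, hi, hic⟩ := List.getElem_of_mem hc
    refine greedy_strict 𝒞 Γ H hgo φ hφ ⟨i, hi, ?_⟩
    rw [List.getD_eq_getElem H 0 hi, hic]
    exact ne_of_lt hlt
end

section
/- Let H be any output of the greedy algorithm on (Γ, C), and write MIB(Γ, C) = (Γ^⊥, C^⊥). Then C^⊥ = C − σ(H) and Γ^⊥ = Γ − Supp(H). -/
open scoped NNRat

/-- For any output `H` of the greedy algorithm, `C^⊥ = 𝒞 − σ(H)` and `Γ^⊥ = Γ − Supp(H)`. -/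
theorem stmt_8 {A : Type} [Fintype A] (𝒞 : Finset (A → ℚ≥0)) (Γ : Set (PrefStmt A))
    (H : List (A → ℚ≥0)) (hgo : GreedyOutput 𝒞 Γ H) :
    MIBC 𝒞 Γ = (𝒞 : Set (A → ℚ≥0)) \ {c | c ∈ H} ∧
    MIBGamma 𝒞 Γ = Γ \ SuppL Γ H := by
  classical
  obtain ⟨hnd, hmem, hord, hmax⟩ := hgo
  -- Key: the C-component of any inconsistency base is disjoint from H
  have key : ∀ Γ₀ C₀, InconsBase 𝒞 Γ Γ₀ C₀ → ∀ c ∈ C₀, c ∉ H := by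
    intro Γ₀ C₀ hb
    by_contra hcon
    push_neg at hcon
    obtain ⟨c, hcC, hcH⟩ := hcon
    obtain ⟨hsubΓ, hsubC, h3, h4⟩ := hb
    have hex : ∃ n, ∃ h : n < H.length, H.get ⟨n, h⟩ ∈ C₀ := by
      obtain ⟨i, hi⟩ := List.mem_iff_get.mp hcH
      exact ⟨i.1, i.2, show H.get i ∈ C₀ from hi ▸ hcC⟩
    set n := Nat.find hex with hndef
    obtain ⟨hn, hnC⟩ := Nat.find_spec hex
    have hmin : ∀ m, m < n → ¬ ∃ h : m < H.length, H.get ⟨m, h⟩ ∈ C₀ :=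
      fun m hm => Nat.find_min hex hm
    obtain ⟨φ, hφΓ₀, hφOpp⟩ := h4 _ hnC
    have hφOppG : φ ∈ OppG Γ (H.get ⟨n, hn⟩) := ⟨hsubΓ hφΓ₀, hφOpp.2⟩
    have hφS := hord ⟨n, hn⟩ hφOppG
    obtain ⟨-, c', hc'mem, hc'lt⟩ := hφS
    obtain ⟨m, hmlen, hmeq⟩ := List.mem_iff_getElem.mp hc'mem
    have hmlt : m < n := lt_of_lt_of_le (by simpa using hmlen) (Nat.min_le_left _ _)
    have hmH : m < H.length := lt_of_lt_of_le hmlt (le_of_lt hn)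
    have hgm : H.get ⟨m, hmH⟩ = c' := by
      rw [← hmeq]; simp [List.getElem_take]
    have hc'𝒞 : c' ∈ 𝒞 := hmem c' (List.mem_of_mem_take hc'mem)
    have hc'C₀ : c' ∈ C₀ := h3 φ hφΓ₀ (Or.inl ⟨hc'𝒞, hc'lt⟩)
    exact hmin m hmlt ⟨hmH, by rw [hgm]; exact hc'C₀⟩
  -- (Γ \ SuppL Γ H, 𝒞 \ H) is an inconsistency base
  have hbase : InconsBase 𝒞 Γ (Γ \ SuppL Γ H) ((𝒞 : Set (A → ℚ≥0)) \ {c | c ∈ H}) := by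
    refine ⟨Set.diff_subset, Set.diff_subset, ?_, ?_⟩
    · rintro φ ⟨hφΓ, hφns⟩ c hc
      rcases hc with ⟨hc𝒞, hclt⟩ | ⟨hc𝒞, hclt⟩
      · exact ⟨hc𝒞, fun hcH => hφns ⟨hφΓ, c, hcH, hclt⟩⟩
      · refine ⟨hc𝒞, fun hcH => ?_⟩
        obtain ⟨i, hi⟩ := List.mem_iff_get.mp hcH
        have : φ ∈ SuppL Γ (H.take i.1) := hord i (by rw [hi]; exact ⟨hφΓ, hclt⟩)
        obtain ⟨-, c', hc'mem, hc'lt⟩ := this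
        exact hφns ⟨hφΓ, c', List.mem_of_mem_take hc'mem, hc'lt⟩
    · rintro c ⟨hc𝒞, hcH⟩
      have := hmax c hc𝒞 hcH
      rw [Set.not_subset] at this
      obtain ⟨φ, ⟨hφΓ, hφlt⟩, hφns⟩ := this
      exact ⟨φ, ⟨hφΓ, hφns⟩, hc𝒞, hφlt⟩
  constructor
  · ext c
    constructor
    · rintro ⟨Γ₀, C₀, hb, hcC₀⟩
      exact ⟨hb.2.1 hcC₀, key Γ₀ C₀ hb c hcC₀⟩
    · intro hc
      exact ⟨_, _, hbase, hc⟩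
  · ext φ
    constructor
    · rintro ⟨Γ₀, C₀, hb, hφΓ₀⟩
      refine ⟨hb.1 hφΓ₀, ?_⟩
      rintro ⟨-, c, hcH, hclt⟩
      have hc𝒞 : c ∈ 𝒞 := hmem c hcH
      have : c ∈ C₀ := hb.2.2.1 φ hφΓ₀ (Or.inl ⟨hc𝒞, hclt⟩)
      exact key _ _ hb c this hcH
    · intro hφ
      exact ⟨_, _, hbase, hφ⟩
end

section
/- Let H be any output of the greedy algorithm on (Γ, C), write MIB(Γ, C) = (Γ^⊥, C^⊥), and suppose H' is a C(1)-model satisfying every statement in Γ^(≤). Then for every φ ∈ Γ, if H' satisfies φ then H satisfies φ; moreover σ(H') ⊆ σ(H) = C − C^⊥. -/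
open scoped NNRat

/-- `H` is a `D(1)`-model: a duplicate-free list of evaluations from `D`. -/
def IsModel {A : Type} (D : Set (A → ℚ≥0)) (H : List (A → ℚ≥0)) : Prop :=
  H.Nodup ∧ ∀ c ∈ H, c ∈ D

/-- `H` is a `D(1*)`-model: a duplicate-free list whose entries are exactly `D`. -/
def IsFullModel {A : Type} (D : Set (A → ℚ≥0)) (H : List (A → ℚ≥0)) : Prop :=
  H.Nodup ∧ ∀ c, c ∈ H ↔ c ∈ D

/-- `H` satisfies every statement in `Γ`. -/
def SatAll {A : Type} (H : List (A → ℚ≥0)) (Γ : Set (PrefStmt A)) : Prop :=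
  ∀ φ ∈ Γ, sat H φ

/-- `Γ ⊨_{D(1)} φ`. -/
def Entails {A : Type} (D : Set (A → ℚ≥0)) (Γ : Set (PrefStmt A)) (φ : PrefStmt A) : Prop :=
  ∀ H, IsModel D H → SatAll H Γ → sat H φ

/-- `Γ ⊨_{D(1*)} φ`. -/
def EntailsStar {A : Type} (D : Set (A → ℚ≥0)) (Γ : Set (PrefStmt A)) (φ : PrefStmt A) : Prop :=
  ∀ H, IsFullModel D H → SatAll H Γ → sat H φ

/-- `Γ` is strongly `D(1)`-consistent. -/
def StrongCons {A : Type} (D : Set (A → ℚ≥0)) (Γ : Set (PrefStmt A)) : Prop :=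
  ∃ H, IsFullModel D H ∧ SatAll H Γ

section Aux

variable {A : Type}

/-- If a model satisfies `α ≤ β` and its `i`-th entry opposes it, some earlier entry supports. -/
lemma satLe_opp_find {L : List (A → ℚ≥0)} {α β : A} (h : satLe L α β) :
    ∀ i (hi : i < L.length), (L.get ⟨i, hi⟩) β < (L.get ⟨i, hi⟩) α →
      ∃ d ∈ L.take i, d α < d β := by
  induction L with
  | nil => intro i hi; simp at hi
  | cons c L ih =>
    intro i hi hopp
    simp only [satLe] at h
    cases i with
    | zero =>
      simp only [List.get] at hopp
      rcases h with h1 | ⟨h2, _⟩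
      · exact absurd h1 (asymm hopp)
      · exact absurd h2 (ne_of_gt hopp)
    | succ j =>
      rcases h with h1 | ⟨h2, h3⟩
      · exact ⟨c, by simp, h1⟩
      · obtain ⟨d, hd, hdlt⟩ := ih h3 j (by simpa using hi) (by simpa using hopp)
        exact ⟨d, by rw [List.take_succ_cons]; exact List.mem_cons.mpr (Or.inr hd), hdlt⟩

/-- If a model does not satisfy `α ≤ β`, there is a first opposing entry. -/
lemma not_satLe_find {L : List (A → ℚ≥0)} {α β : A} (h : ¬ satLe L α β) :
    ∃ i, ∃ hi : i < L.length, (L.get ⟨i, hi⟩) β < (L.get ⟨i, hi⟩) α ∧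
      ∀ d ∈ L.take i, d α = d β := by
  induction L with
  | nil => exact absurd trivial h
  | cons c L ih =>
    simp only [satLe] at h
    rcases lt_trichotomy (c α) (c β) with h1 | h2 | h3
    · exact absurd (Or.inl h1) h
    · have hns : ¬ satLe L α β := fun hs => h (Or.inr ⟨h2, hs⟩)
      obtain ⟨i, hi, ho, he⟩ := ih hns
      refine ⟨i + 1, by simpa using hi, by simpa using ho, ?_⟩
      intro d hd
      rw [List.take_succ_cons] at hd
      rcases List.mem_cons.mp hd with rfl | hd
      · exact h2
      · exact he d hd
    · exact ⟨0, by simp, by exact h3, by simp⟩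

lemma satLt_exists {L : List (A → ℚ≥0)} {α β : A} (h : satLt L α β) :
    ∃ c ∈ L, c α < c β := by
  induction L with
  | nil => simp only [satLt] at h
  | cons c L ih =>
    simp only [satLt] at h
    rcases h with h1 | ⟨_, h3⟩
    · exact ⟨c, by simp, h1⟩
    · obtain ⟨d, hd, hlt⟩ := ih h3
      exact ⟨d, by simp [hd], hlt⟩

lemma satLe_satLt {L : List (A → ℚ≥0)} {α β : A} (h : satLe L α β)
    (hw : ∃ c ∈ L, c α < c β) : satLt L α β := by
  induction L with
  | nil => simp at hw
  | cons c L ih =>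
    simp only [satLe] at h
    simp only [satLt]
    rcases h with h1 | ⟨h2, h3⟩
    · exact Or.inl h1
    · obtain ⟨d, hd, hlt⟩ := hw
      rcases List.mem_cons.mp hd with rfl | hd
      · exact absurd h2 (ne_of_lt hlt)
      · exact Or.inr ⟨h2, ih h3 ⟨d, hd, hlt⟩⟩

end Aux

/-- If `H` is an output of the greedy algorithm and `H'` is a `C(1)`-model of `Γ^(≤)`, then
every `φ ∈ Γ` satisfied by `H'` is satisfied by `H`, and `σ(H') ⊆ σ(H) = 𝒞 − C^⊥`. -/
theorem stmt_10 {A : Type} [Fintype A] (𝒞 : Finset (A → ℚ≥0)) (Γ : Set (PrefStmt A))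
    (H : List (A → ℚ≥0)) (hgo : GreedyOutput 𝒞 Γ H)
    (H' : List (A → ℚ≥0)) (hH' : IsModel (𝒞 : Set (A → ℚ≥0)) H')
    (hsat' : ∀ φ ∈ Γ, satLe H' φ.left φ.right) :
    (∀ φ ∈ Γ, sat H' φ → sat H φ) ∧
    {c | c ∈ H'} ⊆ {c | c ∈ H} ∧
    {c | c ∈ H} = (𝒞 : Set (A → ℚ≥0)) \ MIBC 𝒞 Γ := by
  obtain ⟨hnd, hmem, hgr, hmax⟩ := hgo
  obtain ⟨hnd', hmem'⟩ := hH'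
  -- H satisfies all non-strict statements from Γ
  have hLeH : ∀ φ ∈ Γ, satLe H φ.left φ.right := by
    intro φ hφ
    by_contra h
    obtain ⟨i, hi, ho, he⟩ := not_satLe_find h
    have hOpp : φ ∈ OppG Γ (H.get ⟨i, hi⟩) := ⟨hφ, ho⟩
    obtain ⟨-, d, hd, hlt⟩ := hgr ⟨i, hi⟩ hOpp
    exact absurd (he d hd) (ne_of_lt hlt)
  -- σ(H') ⊆ σ(H)
  have hsubkey : ∀ n, ∀ c ∈ H'.take n, c ∈ H := by
    intro n
    induction n with
    | zero => simp
    | succ n ih =>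
      intro c hc
      rw [List.take_succ] at hc
      rcases List.mem_append.mp hc with hc | hc
      · exact ih c hc
      · have hn : n < H'.length := by
          by_contra hn
          rw [List.getElem?_eq_none (le_of_not_gt hn)] at hc
          simp at hc
        rw [List.getElem?_eq_getElem hn] at hc
        simp only [Option.toList_some, List.mem_singleton] at hc
        subst hc
        by_contra hcH
        have hc𝒞 : H'[n] ∈ 𝒞 := hmem' _ (List.getElem_mem hn)
        obtain ⟨φ, hφo, hφns⟩ := Set.not_subset.mp (hmax _ hc𝒞 hcH)
        have hle := hsat' φ hφo.1
        obtain ⟨d, hd, hlt⟩ := satLe_opp_find hle n hn hφo.2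
        exact hφns ⟨hφo.1, d, ih d hd, hlt⟩
  have hsub : ∀ c ∈ H', c ∈ H := by
    intro c hc
    exact hsubkey H'.length c (by rwa [List.take_length])
  -- entries of H are not in C^⊥
  have hnotMIB : ∀ n, ∀ c ∈ H.take n, c ∉ MIBC 𝒞 Γ := by
    intro n
    induction n with
    | zero => simp
    | succ n ih =>
      intro c hc hcM
      rw [List.take_succ] at hc
      rcases List.mem_append.mp hc with hc | hc
      · exact ih c hc hcM
      · have hn : n < H.length := by
          by_contra hn
          rw [List.getElem?_eq_none (le_of_not_gt hn)] at hc
          simp at hc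
        rw [List.getElem?_eq_getElem hn] at hc
        simp only [Option.toList_some, List.mem_singleton] at hc
        subst hc
        obtain ⟨Γ', C', hb, hcC'⟩ := hcM
        obtain ⟨hΓΓ, hC𝒞, hsuppsub, hoppb⟩ := hb
        obtain ⟨φ, hφΓ', hφopp⟩ := hoppb _ hcC'
        have hOpp : φ ∈ OppG Γ (H.get ⟨n, hn⟩) := ⟨hΓΓ hφΓ', hφopp.2⟩
        obtain ⟨-, d, hd, hlt⟩ := hgr ⟨n, hn⟩ hOpp
        have hd𝒞 : d ∈ 𝒞 := hmem d (List.take_subset n H hd)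
        have hdC' : d ∈ C' := hsuppsub φ hφΓ' (Set.mem_union_left _ ⟨hd𝒞, hlt⟩)
        exact ih d hd ⟨Γ', C', ⟨hΓΓ, hC𝒞, hsuppsub, hoppb⟩, hdC'⟩
  -- evaluations of 𝒞 outside H are in C^⊥
  have hback : ∀ c ∈ 𝒞, c ∉ H → c ∈ MIBC 𝒞 Γ := by
    set Γ' : Set (PrefStmt A) := {φ | φ ∈ Γ ∧ ¬ ∃ d ∈ H, d φ.left < d φ.right} with hΓ'
    set C' : Set (A → ℚ≥0) := {d | d ∈ 𝒞 ∧ ∃ φ ∈ Γ', d ∈ SuppSet 𝒞 φ ∪ OppSet 𝒞 φ} with hC'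
    have hGmk : ∀ d ∈ 𝒞, d ∉ H → ∃ ψ ∈ Γ', d ∈ OppSet 𝒞 ψ := by
      intro d hd𝒞 hdH
      obtain ⟨ψ, hψo, hψn⟩ := Set.not_subset.mp (hmax d hd𝒞 hdH)
      have hψΓ' : ψ ∈ Γ' := ⟨hψo.1, fun ⟨e, heH, hlt⟩ => hψn ⟨hψo.1, e, heH, hlt⟩⟩
      exact ⟨ψ, hψΓ', ⟨hd𝒞, hψo.2⟩⟩
    have hoppC' : ∀ d ∈ C', ∃ φ ∈ Γ', d ∈ OppSet 𝒞 φ := by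
      intro d hd
      obtain ⟨hd𝒞, φ, hφ, hmem2⟩ := hd
      have hdH : d ∉ H := by
        intro hdH
        rcases hmem2 with ⟨-, hs⟩ | ⟨-, ho⟩
        · exact hφ.2 ⟨d, hdH, hs⟩
        · obtain ⟨i, hi⟩ := List.get_of_mem hdH
          have hmemS : φ ∈ SuppL Γ (H.take i.1) := hgr i ⟨hφ.1, by rw [hi]; exact ho⟩
          obtain ⟨-, e, he, hlt⟩ := hmemS
          exact hφ.2 ⟨e, List.take_subset _ _ he, hlt⟩
      exact hGmk d hd𝒞 hdH
    intro c hc𝒞 hcH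
    obtain ⟨ψ, hψΓ', hψopp⟩ := hGmk c hc𝒞 hcH
    have hcC' : c ∈ C' := ⟨hc𝒞, ψ, hψΓ', Set.mem_union_right _ hψopp⟩
    refine ⟨Γ', C', ⟨fun φ hφ => hφ.1, fun d hd => hd.1, ?_, hoppC'⟩, hcC'⟩
    intro φ hφ d hd
    rcases hd with hd | hd
    · exact ⟨hd.1, φ, hφ, Set.mem_union_left _ hd⟩
    · exact ⟨hd.1, φ, hφ, Set.mem_union_right _ hd⟩
  refine ⟨?_, fun c hc => hsub c hc, ?_⟩
  · intro φ hφ hs'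
    cases hb : φ.strict with
    | false =>
      simp only [sat, hb, if_neg Bool.false_ne_true]
      exact hLeH φ hφ
    | true =>
      simp only [sat, hb, if_pos rfl] at hs' ⊢
      obtain ⟨c, hcH', hlt⟩ := satLt_exists hs'
      exact satLe_satLt (hLeH φ hφ) ⟨c, hsub c hcH', hlt⟩
  · ext c
    constructor
    · intro hc
      refine ⟨hmem c hc, hnotMIB H.length c (by rwa [List.take_length])⟩
    · rintro ⟨hc𝒞, hcM⟩
      by_contra hcH
      exact hcM (hback c hc𝒞 hcH)
end

section
/- Suppose Γ is strongly C(1)-consistent. Then for all alternatives α, β: Γ ⊨_{C(1)} α ≤ β if and only if Γ ⊨_{C(1*)} α ≤ β. -/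
open scoped NNRat

/-- All evaluations in `H` tie on `α`, `β`. -/
def Ties {A : Type} (H : List (A → ℚ≥0)) (α β : A) : Prop := ∀ c ∈ H, c α = c β

lemma satLe_iff_s13 {A : Type} (H : List (A → ℚ≥0)) (α β : A) :
    satLe H α β ↔ satLt H α β ∨ Ties H α β := by
  induction H with
  | nil => simp [satLe, satLt, Ties]
  | cons c H ih =>
    simp only [satLe, satLt, Ties, List.mem_cons, ih]
    constructor
    · rintro (h | ⟨he, h | h⟩)
      · exact Or.inl (Or.inl h)
      · exact Or.inl (Or.inr ⟨he, h⟩)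
      · exact Or.inr (by rintro d (rfl | hd); exacts [he, h d hd])
    · rintro ((h | ⟨he, h⟩) | h)
      · exact Or.inl h
      · exact Or.inr ⟨he, Or.inl h⟩
      · exact Or.inr ⟨h c (Or.inl rfl), Or.inr fun d hd => h d (Or.inr hd)⟩

lemma satLt_append {A : Type} (H T : List (A → ℚ≥0)) (α β : A) :
    satLt (H ++ T) α β ↔ satLt H α β ∨ (Ties H α β ∧ satLt T α β) := by
  induction H with
  | nil => simp [satLt, Ties]
  | cons c H ih =>
    simp only [List.cons_append, satLt, Ties, List.mem_cons, List.append_eq, ih]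
    constructor
    · rintro (h | ⟨he, (h | ⟨ht, h⟩)⟩)
      · exact Or.inl (Or.inl h)
      · exact Or.inl (Or.inr ⟨he, h⟩)
      · exact Or.inr ⟨by rintro d (rfl | hd); exacts [he, ht d hd], h⟩
    · rintro ((h | ⟨he, h⟩) | ⟨ht, h⟩)
      · exact Or.inl h
      · exact Or.inr ⟨he, Or.inl h⟩
      · exact Or.inr ⟨ht c (Or.inl rfl), Or.inr ⟨fun d hd => ht d (Or.inr hd), h⟩⟩

lemma satLe_append {A : Type} (H T : List (A → ℚ≥0)) (α β : A) :
    satLe (H ++ T) α β ↔ satLt H α β ∨ (Ties H α β ∧ satLe T α β) := by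
  induction H with
  | nil => simp [satLe, satLt, Ties]
  | cons c H ih =>
    simp only [List.cons_append, satLe, satLt, Ties, List.mem_cons, List.append_eq, ih]
    constructor
    · rintro (h | ⟨he, (h | ⟨ht, h⟩)⟩)
      · exact Or.inl (Or.inl h)
      · exact Or.inl (Or.inr ⟨he, h⟩)
      · exact Or.inr ⟨by rintro d (rfl | hd); exacts [he, ht d hd], h⟩
    · rintro ((h | ⟨he, h⟩) | ⟨ht, h⟩)
      · exact Or.inl h
      · exact Or.inr ⟨he, Or.inl h⟩
      · exact Or.inr ⟨ht c (Or.inl rfl), Or.inr ⟨fun d hd => ht d (Or.inr hd), h⟩⟩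

lemma satLt_filter {A : Type} (p : (A → ℚ≥0) → Prop) [DecidablePred p]
    (T : List (A → ℚ≥0)) (α β : A) (ht : ∀ c ∈ T, ¬ p c → c α = c β) :
    satLt T α β → satLt (T.filter fun c => p c) α β := by
  induction T with
  | nil => simp [satLt]
  | cons c T ih =>
    intro hs
    by_cases hp : p c
    · rw [List.filter_cons_of_pos (by simpa using hp)]
      rcases hs with h | ⟨he, h⟩
      · exact Or.inl h
      · exact Or.inr ⟨he, ih (fun d hd => ht d (List.mem_cons_of_mem _ hd)) h⟩
    · rw [List.filter_cons_of_neg (by simpa using hp)]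
      have he : c α = c β := ht c List.mem_cons_self hp
      rcases hs with h | ⟨_, h⟩
      · exact absurd he h.ne
      · exact ih (fun d hd => ht d (List.mem_cons_of_mem _ hd)) h

lemma satLe_filter {A : Type} (p : (A → ℚ≥0) → Prop) [DecidablePred p]
    (T : List (A → ℚ≥0)) (α β : A) (ht : ∀ c ∈ T, ¬ p c → c α = c β) :
    satLe T α β → satLe (T.filter fun c => p c) α β := by
  induction T with
  | nil => simp [satLe]
  | cons c T ih =>
    intro hs
    by_cases hp : p c
    · rw [List.filter_cons_of_pos (by simpa using hp)]
      rcases hs with h | ⟨he, h⟩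
      · exact Or.inl h
      · exact Or.inr ⟨he, ih (fun d hd => ht d (List.mem_cons_of_mem _ hd)) h⟩
    · rw [List.filter_cons_of_neg (by simpa using hp)]
      have he : c α = c β := ht c List.mem_cons_self hp
      rcases hs with h | ⟨_, h⟩
      · exact absurd he h.ne
      · exact ih (fun d hd => ht d (List.mem_cons_of_mem _ hd)) h

/-- If `Γ` is strongly `C(1)`-consistent then, for non-strict statements,
`⊨_{C(1)}` and `⊨_{C(1*)}` inference coincide. -/
theorem stmt_13 {A : Type} [Fintype A] (𝒞 : Finset (A → ℚ≥0)) (Γ : Set (PrefStmt A))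
    (h : StrongCons (𝒞 : Set (A → ℚ≥0)) Γ) (α β : A) :
    Entails (𝒞 : Set (A → ℚ≥0)) Γ ⟨α, β, false⟩ ↔
      EntailsStar (𝒞 : Set (A → ℚ≥0)) Γ ⟨α, β, false⟩ := by
  classical
  constructor
  · intro h1 H hH hΓ
    exact h1 H ⟨hH.1, fun c hc => (hH.2 c).1 hc⟩ hΓ
  · intro h1 H hH hΓ
    obtain ⟨G, hG, hGΓ⟩ := h
    set T : List (A → ℚ≥0) := G.filter (fun c => c ∉ H) with hT
    have hmemT : ∀ c, c ∈ T ↔ c ∈ G ∧ c ∉ H := by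
      intro c; simp [hT]
    have hfull : IsFullModel (𝒞 : Set (A → ℚ≥0)) (H ++ T) := by
      constructor
      · rw [List.nodup_append]
        refine ⟨hH.1, hG.1.filter _, fun c hc d hdT hcd => ?_⟩
        subst hcd; exact ((hmemT c).1 hdT).2 hc
      · intro c
        rw [List.mem_append, hmemT c]
        constructor
        · rintro (hc | ⟨hc, _⟩)
          · exact hH.2 c hc
          · exact (hG.2 c).1 hc
        · intro hc
          by_cases hcH : c ∈ H
          · exact Or.inl hcH
          · exact Or.inr ⟨(hG.2 c).2 hc, hcH⟩
    have hΓ' : SatAll (H ++ T) Γ := by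
      intro φ hφ
      have hs := hΓ φ hφ
      have hg := hGΓ φ hφ
      unfold sat at hs hg ⊢
      cases hb : φ.strict with
      | true =>
        simp only [hb, if_true] at hs hg
        simp only [if_true] at hs hg ⊢
        rw [satLt_append]
        exact Or.inl hs
      | false =>
        simp only [hb, Bool.false_eq_true, if_false] at hs hg
        simp only [Bool.false_eq_true, if_false]
        rw [satLe_append]
        rcases (satLe_iff_s13 H _ _).1 hs with hlt | hties
        · exact Or.inl hlt
        · refine Or.inr ⟨hties, ?_⟩
          exact satLe_filter _ G _ _
            (fun c hc hch => hties c (not_not.mp hch)) hg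
    have := h1 (H ++ T) hfull hΓ'
    unfold sat at this ⊢
    simp only [Bool.false_eq_true, if_false] at this ⊢
    rw [satLe_append] at this
    rcases this with hlt | ⟨hties, _⟩
    · exact (satLe_iff_s13 H α β).2 (Or.inl hlt)
    · exact (satLe_iff_s13 H α β).2 (Or.inr hties)
end

section
/- Suppose Γ is strongly C(1)-consistent. Then for all alternatives α, β: Γ ⊨_{C(1*)} α ≤ β and Γ ⊨_{C(1*)} β ≤ α both hold if and only if α and β agree on all of C, i.e., c(α) = c(β) for every c ∈ C. -/
open scoped NNRat

lemma satLe_both_iff {A : Type} (H : List (A → ℚ≥0)) (α β : A) :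
    (satLe H α β ∧ satLe H β α) ↔ ∀ c ∈ H, c α = c β := by
  induction H with
  | nil => simp [satLe]
  | cons c H ih =>
    simp only [satLe, List.mem_cons]
    constructor
    · rintro ⟨h1 | ⟨e1, h1⟩, h2 | ⟨e2, h2⟩⟩
      · exact absurd h2 (not_lt.2 h1.le)
      · exact absurd h1 (lt_irrefl _ (e2 ▸ h1)).elim
      · exact absurd h2 (lt_irrefl _ (e1 ▸ h2)).elim
      · rintro d (rfl | hd)
        · exact e1
        · exact (ih.1 ⟨h1, h2⟩) d hd
    · intro hall
      have e := hall c (Or.inl rfl)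
      have := ih.2 (fun d hd => hall d (Or.inr hd))
      exact ⟨Or.inr ⟨e, this.1⟩, Or.inr ⟨e.symm, this.2⟩⟩

/-- If `Γ` is strongly `C(1)`-consistent, then `Γ ⊨_{C(1*)} α ≡ β` iff `α` and `β` agree on
all of `𝒞`. -/
theorem stmt_14 {A : Type} [Fintype A] (𝒞 : Finset (A → ℚ≥0)) (Γ : Set (PrefStmt A))
    (h : StrongCons (𝒞 : Set (A → ℚ≥0)) Γ) (α β : A) :
    (EntailsStar (𝒞 : Set (A → ℚ≥0)) Γ ⟨α, β, false⟩ ∧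
      EntailsStar (𝒞 : Set (A → ℚ≥0)) Γ ⟨β, α, false⟩) ↔
      ∀ c ∈ 𝒞, c α = c β := by
  obtain ⟨H0, hH0, hS0⟩ := h
  constructor
  · rintro ⟨e1, e2⟩ c hc
    have s1 := e1 H0 hH0 hS0
    have s2 := e2 H0 hH0 hS0
    simp only [sat] at s1 s2
    exact (satLe_both_iff H0 α β).1 ⟨s1, s2⟩ c ((hH0.2 c).2 hc)
  · intro hall
    constructor <;> intro H hH _ <;> simp only [sat, if_neg (by simp : ¬(false = true))]
    · exact ((satLe_both_iff H α β).2 (fun c hc => hall c ((hH.2 c).1 hc))).1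
    · exact ((satLe_both_iff H α β).2 (fun c hc => hall c ((hH.2 c).1 hc))).2
end

section
/- Suppose Γ is C(1)-consistent, write MIB(Γ, C) = (Γ^⊥, C^⊥), and let C' = C − C^⊥. Then Γ is strongly C'(1)-consistent (i.e., some duplicate-free list containing exactly the elements of C' satisfies Γ), and for every preference statement φ: Γ ⊨_{C(1)} φ if and only if Γ ⊨_{C'(1)} φ. -/
open scoped NNRat

lemma aux_sat_cons {A : Type} {d : A → ℚ≥0} {T : List (A → ℚ≥0)} {φ : PrefStmt A}
    (h : sat (d :: T) φ) :
    d φ.left < d φ.right ∨ (d φ.left = d φ.right ∧ sat T φ) := by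
  cases hb : φ.strict <;> simp only [sat, hb, if_true, if_false, Bool.false_eq_true,
    satLt, satLe] at h ⊢ <;> tauto

lemma aux_not_in_base {A : Type} (𝒞 : Finset (A → ℚ≥0)) (Γ₀ : Set (PrefStmt A))
    (C₀ : Set (A → ℚ≥0))
    (hSupp : ∀ φ ∈ Γ₀, SuppSet 𝒞 φ ∪ OppSet 𝒞 φ ⊆ C₀)
    (hOpp : ∀ c ∈ C₀, ∃ φ ∈ Γ₀, c ∈ OppSet 𝒞 φ) :
    ∀ H : List (A → ℚ≥0), (∀ c ∈ H, c ∈ 𝒞) → (∀ φ ∈ Γ₀, sat H φ) →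
      ∀ c ∈ H, c ∉ C₀ := by
  intro H
  induction H with
  | nil => simp
  | cons d T ih =>
    intro hmem hsat
    have hdC : d ∈ 𝒞 := hmem d List.mem_cons_self
    have hdnot : d ∉ C₀ := by
      intro hd
      obtain ⟨φ, hφ, hopp⟩ := hOpp d hd
      rcases aux_sat_cons (hsat φ hφ) with h | ⟨h, -⟩
      · exact absurd hopp.2 (not_lt.mpr h.le)
      · exact absurd hopp.2 (not_lt.mpr h.le)
    have htail : ∀ φ ∈ Γ₀, sat T φ := by
      intro φ hφ
      rcases aux_sat_cons (hsat φ hφ) with h | ⟨-, h⟩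
      · exact absurd (hSupp φ hφ (Or.inl ⟨hdC, h⟩)) hdnot
      · exact h
    intro c hc
    rcases List.mem_cons.mp hc with rfl | hc
    · exact hdnot
    · exact ih (fun c hc => hmem c (List.mem_cons_of_mem _ hc)) htail c hc

lemma aux_model_avoids {A : Type} (𝒞 : Finset (A → ℚ≥0)) (Γ : Set (PrefStmt A))
    (H : List (A → ℚ≥0)) (hmem : ∀ c ∈ H, c ∈ 𝒞) (hsat : SatAll H Γ) :
    ∀ c ∈ H, c ∉ MIBC 𝒞 Γ := by
  rintro c hc ⟨Γ', C', hbase, hcC'⟩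
  exact aux_not_in_base 𝒞 Γ' C' hbase.2.2.1 hbase.2.2.2 H hmem
    (fun φ hφ => hsat φ (hbase.1 hφ)) c hc hcC'

lemma aux_satLt_append {A : Type} (L : List (A → ℚ≥0)) {α β : A} :
    ∀ H : List (A → ℚ≥0), satLt H α β → satLt (H ++ L) α β := by
  intro H
  induction H with
  | nil => intro h; exact absurd h (by simp [satLt])
  | cons d T ih =>
    rintro (h | ⟨h, h2⟩)
    · exact Or.inl h
    · exact Or.inr ⟨h, ih h2⟩

lemma aux_satLe_append {A : Type} (c : A → ℚ≥0) {α β : A} :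
    ∀ H : List (A → ℚ≥0), satLe H α β → ((∀ d ∈ H, d α = d β) → c α ≤ c β) →
      satLe (H ++ [c]) α β := by
  intro H
  induction H with
  | nil =>
    intro _ hc
    rcases lt_or_eq_of_le (hc (by simp)) with h' | h'
    · exact Or.inl h'
    · exact Or.inr ⟨h', trivial⟩
  | cons d T ih =>
    rintro (h | ⟨h, h2⟩) hc
    · exact Or.inl h
    · refine Or.inr ⟨h, ih h2 (fun hall => hc ?_)⟩
      intro e he
      rcases List.mem_cons.mp he with rfl | he
      · exact h
      · exact hall e he

lemma aux_extend {A : Type} (𝒞 : Finset (A → ℚ≥0)) (Γ : Set (PrefStmt A))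
    (H : List (A → ℚ≥0)) (hmem : ∀ c ∈ H, c ∈ 𝒞) (hsat : SatAll H Γ)
    (hne : ∃ c, c ∈ 𝒞 ∧ c ∉ MIBC 𝒞 Γ ∧ c ∉ H) :
    ∃ c, c ∈ 𝒞 ∧ c ∉ MIBC 𝒞 Γ ∧ c ∉ H ∧ SatAll (H ++ [c]) Γ := by
  by_contra hcon
  push_neg at hcon
  set Geq : Set (PrefStmt A) := {φ | φ ∈ Γ ∧ ∀ d ∈ H, d φ.left = d φ.right} with hGeq
  have key : ∀ c, c ∈ 𝒞 → c ∉ MIBC 𝒞 Γ → c ∉ H → ∃ φ ∈ Geq, c φ.right < c φ.left := by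
    intro c hc1 hc2 hc3
    have hnot := hcon c hc1 hc2 hc3
    rw [SatAll] at hnot
    push_neg at hnot
    obtain ⟨φ, hφ, hfail⟩ := hnot
    have hsatφ := hsat φ hφ
    cases hb : φ.strict with
    | true =>
      simp only [sat, hb, if_true] at hsatφ hfail
      exact absurd (aux_satLt_append [c] H hsatφ) hfail
    | false =>
      simp only [sat, hb, Bool.false_eq_true, if_false] at hsatφ hfail
      have himp : ¬((∀ d ∈ H, d φ.left = d φ.right) → c φ.left ≤ c φ.right) :=
        fun h => hfail (aux_satLe_append c H hsatφ h)
      push_neg at himp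
      exact ⟨φ, ⟨hφ, himp.1⟩, himp.2⟩
  obtain ⟨c₀, hc₀C, hc₀M, hc₀H⟩ := hne
  set C₁ : Set (A → ℚ≥0) :=
    {c | ∃ φ ∈ Geq, c ∈ SuppSet 𝒞 φ ∪ OppSet 𝒞 φ} ∪ MIBC 𝒞 Γ with hC₁
  set Γ₁ : Set (PrefStmt A) := Geq ∪ MIBGamma 𝒞 Γ with hΓ₁
  have hbase : InconsBase 𝒞 Γ Γ₁ C₁ := by
    refine ⟨?_, ?_, ?_, ?_⟩
    · rintro φ (hφ | ⟨Γ', C', hb, hφ⟩)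
      · exact hφ.1
      · exact hb.1 hφ
    · rintro c (⟨φ, hφ, (h | h)⟩ | ⟨Γ', C', hb, hc⟩)
      · exact h.1
      · exact h.1
      · exact hb.2.1 hc
    · rintro φ (hφ | ⟨Γ', C', hb, hφ⟩)
      · intro c hc; exact Or.inl ⟨φ, hφ, hc⟩
      · intro c hc; exact Or.inr ⟨Γ', C', hb, hb.2.2.1 φ hφ hc⟩
    · rintro c (⟨φ, hφ, hc⟩ | ⟨Γ', C', hb, hc⟩)
      · have hcC : c ∈ 𝒞 := by rcases hc with h | h; exacts [h.1, h.1]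
        have hcH : c ∉ H := by
          intro hmemH
          have heq := hφ.2 c hmemH
          rcases hc with h | h
          · exact absurd h.2 (by rw [heq]; exact lt_irrefl _)
          · exact absurd h.2 (by rw [heq]; exact lt_irrefl _)
        by_cases hM : c ∈ MIBC 𝒞 Γ
        · obtain ⟨Γ', C', hb, hc'⟩ := hM
          obtain ⟨ψ, hψ, ho⟩ := hb.2.2.2 c hc'
          exact ⟨ψ, Or.inr ⟨Γ', C', hb, hψ⟩, ho⟩
        · obtain ⟨ψ, hψ, ho⟩ := key c hcC hM hcH
          exact ⟨ψ, Or.inl hψ, ⟨hcC, ho⟩⟩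
      · obtain ⟨ψ, hψ, ho⟩ := hb.2.2.2 c hc
        exact ⟨ψ, Or.inr ⟨Γ', C', hb, hψ⟩, ho⟩
  obtain ⟨φ, hφ, hlt⟩ := key c₀ hc₀C hc₀M hc₀H
  exact hc₀M ⟨Γ₁, C₁, hbase, Or.inl ⟨φ, hφ, Or.inr ⟨hc₀C, hlt⟩⟩⟩

lemma aux_full {A : Type} (𝒞 : Finset (A → ℚ≥0)) (Γ : Set (PrefStmt A))
    (H : List (A → ℚ≥0)) (hmem : ∀ c ∈ H, c ∈ 𝒞) (hnd : H.Nodup) (hsat : SatAll H Γ)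
    (hfull : ∀ c ∈ 𝒞, c ∉ MIBC 𝒞 Γ → c ∈ H) :
    IsFullModel ((𝒞 : Set (A → ℚ≥0)) \ MIBC 𝒞 Γ) H ∧ SatAll H Γ := by
  refine ⟨⟨hnd, fun c => ⟨?_, ?_⟩⟩, hsat⟩
  · intro hc
    exact ⟨hmem c hc, aux_model_avoids 𝒞 Γ H hmem hsat c hc⟩
  · rintro ⟨hc1, hc2⟩
    exact hfull c hc1 hc2

open scoped Classical in
lemma aux_fill {A : Type} (𝒞 : Finset (A → ℚ≥0)) (Γ : Set (PrefStmt A)) :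
    ∀ n (H : List (A → ℚ≥0)), (∀ c ∈ H, c ∈ 𝒞) → H.Nodup → SatAll H Γ →
      (𝒞.filter (fun c => c ∉ MIBC 𝒞 Γ ∧ c ∉ H)).card ≤ n →
      ∃ H', IsFullModel ((𝒞 : Set (A → ℚ≥0)) \ MIBC 𝒞 Γ) H' ∧ SatAll H' Γ := by
  classical
  intro n
  induction n with
  | zero =>
    intro H hmem hnd hsat hcard
    refine ⟨H, aux_full 𝒞 Γ H hmem hnd hsat ?_⟩
    intro c hc1 hc2
    by_contra hc3
    have hfe : (𝒞.filter (fun c => c ∉ MIBC 𝒞 Γ ∧ c ∉ H)) = ∅ :=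
      Finset.card_eq_zero.mp (Nat.le_zero.mp hcard)
    have : c ∈ (𝒞.filter (fun c => c ∉ MIBC 𝒞 Γ ∧ c ∉ H)) :=
      Finset.mem_filter.mpr ⟨hc1, hc2, hc3⟩
    simp [hfe] at this
  | succ n ih =>
    intro H hmem hnd hsat hcard
    by_cases hne : ∃ c, c ∈ 𝒞 ∧ c ∉ MIBC 𝒞 Γ ∧ c ∉ H
    · obtain ⟨c, hc1, hc2, hc3, hsat'⟩ := aux_extend 𝒞 Γ H hmem hsat hne
      have hmem' : ∀ e ∈ H ++ [c], e ∈ 𝒞 := by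
        intro e he
        rcases List.mem_append.mp he with he | he
        · exact hmem e he
        · simp at he; subst he; exact hc1
      have hnd' : (H ++ [c]).Nodup := by
        refine List.Nodup.append hnd (List.nodup_singleton c) ?_
        intro a ha hb
        simp at hb; subst hb; exact hc3 ha
      refine ih (H ++ [c]) hmem' hnd' hsat' ?_
      have hsub : (𝒞.filter (fun e => e ∉ MIBC 𝒞 Γ ∧ e ∉ H ++ [c])) ⊆
          (𝒞.filter (fun e => e ∉ MIBC 𝒞 Γ ∧ e ∉ H)).erase c := by
        intro e he
        rw [Finset.mem_filter] at he
        refine Finset.mem_erase.mpr ⟨?_, Finset.mem_filter.mpr ⟨he.1, he.2.1,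
          fun h => he.2.2 (List.mem_append.mpr (Or.inl h))⟩⟩
        intro h; subst h
        exact he.2.2 (List.mem_append.mpr (Or.inr (by simp)))
      have hcmem : c ∈ (𝒞.filter (fun e => e ∉ MIBC 𝒞 Γ ∧ e ∉ H)) :=
        Finset.mem_filter.mpr ⟨hc1, hc2, hc3⟩
      calc (𝒞.filter (fun e => e ∉ MIBC 𝒞 Γ ∧ e ∉ H ++ [c])).card
          ≤ ((𝒞.filter (fun e => e ∉ MIBC 𝒞 Γ ∧ e ∉ H)).erase c).card :=
            Finset.card_le_card hsub
        _ = (𝒞.filter (fun e => e ∉ MIBC 𝒞 Γ ∧ e ∉ H)).card - 1 :=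
            Finset.card_erase_of_mem hcmem
        _ ≤ n := by omega
    · push_neg at hne
      exact ⟨H, aux_full 𝒞 Γ H hmem hnd hsat hne⟩

/-- If `Γ` is `C(1)`-consistent and `C' = 𝒞 − C^⊥`, then `Γ` is strongly `C'(1)`-consistent,
and `Γ ⊨_{C(1)} φ` iff `Γ ⊨_{C'(1)} φ`. -/
theorem stmt_16 {A : Type} [Fintype A] (𝒞 : Finset (A → ℚ≥0)) (Γ : Set (PrefStmt A))
    (hcons : ∃ H : List (A → ℚ≥0), IsModel (𝒞 : Set (A → ℚ≥0)) H ∧ SatAll H Γ) :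
    StrongCons ((𝒞 : Set (A → ℚ≥0)) \ MIBC 𝒞 Γ) Γ ∧
    ∀ φ : PrefStmt A,
      Entails (𝒞 : Set (A → ℚ≥0)) Γ φ ↔ Entails ((𝒞 : Set (A → ℚ≥0)) \ MIBC 𝒞 Γ) Γ φ := by
  classical
  obtain ⟨H, ⟨hnd, hmem⟩, hsat⟩ := hcons
  have hmem' : ∀ c ∈ H, c ∈ 𝒞 := fun c hc => hmem c hc
  constructor
  · exact aux_fill 𝒞 Γ _ H hmem' hnd hsat le_rfl
  · intro φ
    constructor
    · intro h H' hH' hs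
      exact h H' ⟨hH'.1, fun c hc => (hH'.2 c hc).1⟩ hs
    · intro h H' hH' hs
      exact h H' ⟨hH'.1, fun c hc => ⟨hH'.2 c hc,
        aux_model_avoids 𝒞 Γ H' (fun c hc => hH'.2 c hc) hs c hc⟩⟩ hs
end

section
/- For every C(1)-model H and every pair of alternatives α, β: H satisfies α < β if and only if H satisfies the ordering statement Supp^{α<β} < Opp^{α<β}; and H satisfies α ≤ β if and only if H satisfies the ordering statement Supp^{α≤β} ≤ Opp^{α≤β} (where Supp and Opp are computed for the statement with left alternative α and right alternative β). -/
open scoped NNRat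

/-- `H` satisfies the ordering statement `C₁ < C₂`: some element of `C₁` appears in `H`,
and the earliest element of `C₁ ∪ C₂` appearing in `H` belongs to `C₁`. -/
def satOrdLt {A : Type} (H : List (A → ℚ≥0)) (C₁ C₂ : Set (A → ℚ≥0)) : Prop :=
  ∃ i : Fin H.length, H.get i ∈ C₁ ∧
    ∀ j : Fin H.length, j < i → H.get j ∉ C₁ ∧ H.get j ∉ C₂

/-- `H` satisfies the ordering statement `C₁ ≤ C₂`. -/
def satOrdLe {A : Type} (H : List (A → ℚ≥0)) (C₁ C₂ : Set (A → ℚ≥0)) : Prop :=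
  satOrdLt H C₁ C₂ ∨ ∀ c ∈ H, c ∉ C₁ ∧ c ∉ C₂


lemma ordLt_cons_of_not_mem {A : Type} (c : A → ℚ≥0) (H : List (A → ℚ≥0))
    {C₁ C₂ : Set (A → ℚ≥0)} (h1 : c ∉ C₁) (h2 : c ∉ C₂) :
    satOrdLt (c :: H) C₁ C₂ ↔ satOrdLt H C₁ C₂ := by
  constructor
  · rintro ⟨i, hi, hmin⟩
    rcases Fin.eq_zero_or_eq_succ i with rfl | ⟨j, rfl⟩
    · exact absurd hi h1
    · refine ⟨j, by simpa using hi, ?_⟩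
      intro k hk
      have := hmin k.succ (by simpa using hk)
      simpa using this
  · rintro ⟨j, hj, hmin⟩
    refine ⟨j.succ, by simpa using hj, ?_⟩
    intro k hk
    rcases Fin.eq_zero_or_eq_succ k with rfl | ⟨k', rfl⟩
    · exact ⟨h1, h2⟩
    · have := hmin k' (by simpa using hk)
      simpa using this

/-- Satisfaction of `α < β` (resp. `α ≤ β`) by a `C(1)`-model is equivalent to satisfaction of
the ordering statement `Supp^φ < Opp^φ` (resp. `Supp^φ ≤ Opp^φ`). -/
theorem stmt_18 {A : Type} [Fintype A] (𝒞 : Finset (A → ℚ≥0))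
    (H : List (A → ℚ≥0)) (hnd : H.Nodup) (hmem : ∀ c ∈ H, c ∈ 𝒞) (α β : A) :
    (satLt H α β ↔
      satOrdLt H (SuppSet 𝒞 ⟨α, β, true⟩) (OppSet 𝒞 ⟨α, β, true⟩)) ∧
    (satLe H α β ↔
      satOrdLe H (SuppSet 𝒞 ⟨α, β, false⟩) (OppSet 𝒞 ⟨α, β, false⟩)) := by
  clear hnd
  induction H with
  | nil =>
    constructor
    · simp [satLt, satOrdLt]
    · simp [satLe, satOrdLe]
  | cons c H ih =>
    have hc𝒞 : c ∈ 𝒞 := hmem c (List.mem_cons_self)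
    have ih' := ih (fun x hx => hmem x (List.mem_cons_of_mem c hx))
    have hSupp : ∀ b x, x ∈ SuppSet 𝒞 ⟨α, β, b⟩ ↔ (x ∈ 𝒞 ∧ x α < x β) := by
      intro b x; rfl
    have hOpp : ∀ b x, x ∈ OppSet 𝒞 ⟨α, β, b⟩ ↔ (x ∈ 𝒞 ∧ x β < x α) := by
      intro b x; rfl
    rcases lt_trichotomy (c α) (c β) with hlt | heq | hgt
    · have hS : ∀ b, c ∈ SuppSet 𝒞 ⟨α, β, b⟩ := fun b => (hSupp b c).mpr ⟨hc𝒞, hlt⟩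
      have hord : ∀ b, satOrdLt (c :: H) (SuppSet 𝒞 ⟨α, β, b⟩) (OppSet 𝒞 ⟨α, β, b⟩) := by
        intro b
        exact ⟨⟨0, Nat.succ_pos _⟩, hS b, fun j hj => absurd hj (by simp)⟩
      constructor
      · simp only [satLt]
        exact ⟨fun _ => hord true, fun _ => Or.inl hlt⟩
      · simp only [satLe]
        exact ⟨fun _ => Or.inl (hord false), fun _ => Or.inl hlt⟩
    · have hnS : ∀ b, c ∉ SuppSet 𝒞 ⟨α, β, b⟩ := fun b h => absurd ((hSupp b c).mp h).2 (by simp [heq])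
      have hnO : ∀ b, c ∉ OppSet 𝒞 ⟨α, β, b⟩ := fun b h => absurd ((hOpp b c).mp h).2 (by simp [heq])
      constructor
      · rw [ordLt_cons_of_not_mem c H (hnS true) (hnO true), ← ih'.1]
        simp [satLt, heq]
      · rw [satOrdLe, ordLt_cons_of_not_mem c H (hnS false) (hnO false)]
        simp only [List.mem_cons, forall_eq_or_imp]
        rw [and_iff_right ⟨hnS false, hnO false⟩, ← satOrdLe, ← ih'.2]
        simp [satLe, heq]
    · have hO : ∀ b, c ∈ OppSet 𝒞 ⟨α, β, b⟩ := fun b => (hOpp b c).mpr ⟨hc𝒞, hgt⟩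
      have hnord : ∀ b, ¬ satOrdLt (c :: H) (SuppSet 𝒞 ⟨α, β, b⟩) (OppSet 𝒞 ⟨α, β, b⟩) := by
        rintro b ⟨i, hi, hmin⟩
        rcases Fin.eq_zero_or_eq_succ i with rfl | ⟨j, rfl⟩
        · exact absurd ((hSupp b _).mp hi).2 (asymm hgt)
        · exact (hmin ⟨0, Nat.succ_pos _⟩ (Fin.succ_pos j)).2 (hO b)
      have hne : c α ≠ c β := ne_of_gt hgt
      constructor
      · simp only [satLt]
        constructor
        · rintro (h | ⟨h, _⟩)
          · exact absurd h (asymm hgt)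
          · exact absurd h hne
        · intro h; exact absurd h (hnord true)
      · simp only [satLe, satOrdLe]
        constructor
        · rintro (h | ⟨h, _⟩)
          · exact absurd h (asymm hgt)
          · exact absurd h hne
        · rintro (h | h)
          · exact absurd h (hnord false)
          · exact absurd (hO false) (h c (List.mem_cons_self)).2
end

section
/- Let C_1, C_2 be disjoint subsets of C and define alternatives α, β with evaluations: c(α) = 1 for c ∈ C_2 and c(α) = 0 for c ∈ C − C_2; c(β) = 1 for c ∈ C_1 and c(β) = 0 for c ∈ C − C_1. Then for every C(1)-model H: H satisfies the ordering statement C_1 < C_2 if and only if H satisfies the preference statement α < β. -/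
open scoped NNRat

lemma satOrdLt_cons {A : Type} (c : A → ℚ≥0) (H : List (A → ℚ≥0)) (C₁ C₂ : Set (A → ℚ≥0)) :
    satOrdLt (c :: H) C₁ C₂ ↔ c ∈ C₁ ∨ (c ∉ C₁ ∧ c ∉ C₂ ∧ satOrdLt H C₁ C₂) := by
  constructor
  · rintro ⟨⟨i, hi⟩, hmem, h2⟩
    cases i with
    | zero => exact Or.inl hmem
    | succ k =>
      have h0 := h2 ⟨0, Nat.succ_pos _⟩ (by simp [Fin.lt_def])
      simp only [List.get] at h0 hmem
      refine Or.inr ⟨h0.1, h0.2, ⟨⟨k, Nat.lt_of_succ_lt_succ hi⟩, hmem, ?_⟩⟩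
      rintro ⟨j, hj⟩ hlt
      have := h2 ⟨j+1, Nat.succ_lt_succ hj⟩
        (by simp only [Fin.lt_def] at hlt ⊢; omega)
      simpa using this
  · rintro (h | ⟨ha, hb, ⟨⟨i, hi⟩, g1, g2⟩⟩)
    · refine ⟨⟨0, Nat.succ_pos _⟩, h, ?_⟩
      rintro ⟨j, hj⟩ hlt
      simp [Fin.lt_def] at hlt
    · refine ⟨⟨i+1, Nat.succ_lt_succ hi⟩, g1, ?_⟩
      rintro ⟨j, hj⟩ hlt
      cases j with
      | zero => exact ⟨ha, hb⟩
      | succ m =>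
        exact g2 ⟨m, Nat.lt_of_succ_lt_succ hj⟩
          (by simp only [Fin.lt_def] at hlt ⊢; omega)

/-- Any ordering statement `C₁ < C₂` can be expressed as a preference statement `α < β` for
suitably valued alternatives `α, β`. -/
theorem stmt_19 {A : Type} [Fintype A] (𝒞 : Finset (A → ℚ≥0))
    (C₁ C₂ : Set (A → ℚ≥0)) (h1 : C₁ ⊆ (𝒞 : Set (A → ℚ≥0)))
    (h2 : C₂ ⊆ (𝒞 : Set (A → ℚ≥0))) (hdisj : Disjoint C₁ C₂)
    (α β : A)
    (hα1 : ∀ c ∈ C₂, c α = 1) (hα0 : ∀ c ∈ 𝒞, c ∉ C₂ → c α = 0)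
    (hβ1 : ∀ c ∈ C₁, c β = 1) (hβ0 : ∀ c ∈ 𝒞, c ∉ C₁ → c β = 0)
    (H : List (A → ℚ≥0)) (hnd : H.Nodup) (hmem : ∀ c ∈ H, c ∈ 𝒞) :
    satOrdLt H C₁ C₂ ↔ satLt H α β := by
  induction H with
  | nil =>
    simp [satOrdLt, satLt]
  | cons c H ih =>
    have hc : c ∈ 𝒞 := hmem c List.mem_cons_self
    have ih' := ih hnd.of_cons (fun d hd => hmem d (List.mem_cons_of_mem _ hd))
    rw [satOrdLt_cons]
    show _ ↔ c α < c β ∨ (c α = c β ∧ satLt H α β)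
    by_cases hc1 : c ∈ C₁
    · have hc2 : c ∉ C₂ := fun h => hdisj.ne_of_mem hc1 h rfl
      have e1 : c α = 0 := hα0 c hc hc2
      have e2 : c β = 1 := hβ1 c hc1
      simp [hc1, e1, e2]
    · by_cases hc2 : c ∈ C₂
      · have e1 : c α = 1 := hα1 c hc2
        have e2 : c β = 0 := hβ0 c hc hc1
        simp [hc1, hc2, e1, e2]
      · have e1 : c α = 0 := hα0 c hc hc2
        have e2 : c β = 0 := hβ0 c hc hc1
        simp [hc1, hc2, e1, e2, ih']
end
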